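/- Let A₁,...,A_m be formal power series in x₁,...,x_m with A_i = x_i·Φ_i(∏_{j≠i} A_j) for given one-variable power series Φ_i. Let n₁,...,n_m ≥ 1 and α₁,...,α_m ≥ 0 with n_i ≥ α_i, and suppose β := (Σn_i − Σα_i)/(m−1) is an integer; set β_i = β − n_i + α_i. Then [x₁^{n₁}⋯x_m^{n_m}] A₁^{α₁}⋯A_m^{α_m} = D·∏_i [s_i^{β_i}] Φ_i^{n_i}(s_i), where D = ∏_i (1 + β_i/n_i) − Σ_j (β_j/n_j)∏_{i≠j}(1 + β_i/n_i). -/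

import Mathlib

/-- The composition `Φ(B) = ∑ₖ (coeff k Φ) Bᵏ` of a one-variable power series
`Φ` with a multivariate power series `B` having zero constant coefficient,
given coefficientwise (only `k ≤ |d|` contributes to the coefficient of the
monomial `d` when the constant coefficient of `B` vanishes). -/
noncomputable def phiComp {m : ℕ} (Φ : PowerSeries ℚ) (B : MvPowerSeries (Fin m) ℚ) :
    MvPowerSeries (Fin m) ℚ :=
  fun d => ∑ k ∈ Finset.range ((d.sum fun _ v => v) + 1),
    PowerSeries.coeff k Φ * MvPowerSeries.coeff d (B ^ k)

/-- coefficient extraction at an integer index (zero at negative indices). -/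
noncomputable def coeffZ (k : ℤ) (f : PowerSeries ℚ) : ℚ :=
  if 0 ≤ k then PowerSeries.coeff k.toNat f else 0

open Finset

/-! ### One-variable lemmas -/

noncomputable def xd (f : PowerSeries ℚ) : PowerSeries ℚ :=
  PowerSeries.mk fun k => (k : ℚ) * PowerSeries.coeff k f

lemma coeff_xd (k : ℕ) (f : PowerSeries ℚ) :
    PowerSeries.coeff k (xd f) = (k : ℚ) * PowerSeries.coeff k f :=
  PowerSeries.coeff_mk _ _

lemma xd_mul (f g : PowerSeries ℚ) : xd (f * g) = xd f * g + f * xd g := by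
  ext k
  rw [map_add, PowerSeries.coeff_mul, PowerSeries.coeff_mul, coeff_xd, PowerSeries.coeff_mul,
    mul_sum, ← sum_add_distrib]
  refine Finset.sum_congr rfl fun p hp => ?_
  rw [Finset.HasAntidiagonal.mem_antidiagonal] at hp
  rw [coeff_xd, coeff_xd, ← hp]
  push_cast
  ring

lemma xd_one : xd 1 = 0 := by
  ext k
  rw [coeff_xd, map_zero]
  rcases Nat.eq_zero_or_pos k with h | h
  · simp [h]
  · rw [PowerSeries.coeff_one, if_neg (by omega)]
    ring

lemma xd_pow (f : PowerSeries ℚ) (n : ℕ) (hn : 1 ≤ n) :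
    xd (f ^ n) = (n : ℚ) • (f ^ (n - 1) * xd f) := by
  induction n with
  | zero => omega
  | succ n ih =>
    rcases Nat.eq_zero_or_pos n with h | h
    · subst h; simp
    · rw [pow_succ, xd_mul, ih h]
      have h1 : n - 1 + 1 = n := by omega
      push_cast
      rw [smul_mul_assoc]
      rw [show f ^ (n - 1) * xd f * f = f ^ (n - 1) * f * xd f by ring, ← pow_succ, h1]
      rw [add_smul, one_smul]

lemma key_pow_identity (Φ : PowerSeries ℚ) (a g n : ℕ) (h : n = a + g) :
    (n : ℚ) • (xd (Φ ^ a) * Φ ^ g) = (a : ℚ) • xd (Φ ^ n) := by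
  rcases Nat.eq_zero_or_pos a with ha | ha
  · subst ha; simp [xd_one]
  · have hn : 1 ≤ n := by omega
    rw [xd_pow Φ a ha, xd_pow Φ n hn]
    rw [smul_mul_assoc, smul_smul, smul_smul]
    rw [show Φ ^ (a - 1) * xd Φ * Φ ^ g = Φ ^ (a - 1) * Φ ^ g * xd Φ by ring, ← pow_add]
    rw [show a - 1 + g = n - 1 by omega, mul_comm (n : ℚ) (a : ℚ)]

/-! ### coeffZ lemmas -/

lemma coeffZ_neg {k : ℤ} (hk : k < 0) (f : PowerSeries ℚ) : coeffZ k f = 0 := by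
  rw [coeffZ, if_neg (by omega)]

lemma coeffZ_natCast (k : ℕ) (f : PowerSeries ℚ) :
    coeffZ (k : ℤ) f = PowerSeries.coeff k f := by
  rw [coeffZ, if_pos (by positivity), Int.toNat_natCast]

lemma coeffZ_smul (c : ℚ) (f : PowerSeries ℚ) (k : ℤ) :
    coeffZ k (c • f) = c * coeffZ k f := by
  rw [coeffZ, coeffZ]
  split
  · rw [map_smul]; rfl
  · ring

lemma coeffZ_one {k : ℤ} (hk : k ≠ 0) : coeffZ k (1 : PowerSeries ℚ) = 0 := by
  rcases lt_or_ge k 0 with h | h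
  · exact coeffZ_neg h _
  · rw [coeffZ, if_pos h, PowerSeries.coeff_one, if_neg (by omega)]

lemma coeffZ_xd (h : PowerSeries ℚ) (r : ℤ) : coeffZ r (xd h) = (r : ℚ) * coeffZ r h := by
  rcases lt_or_ge r 0 with hr | hr
  · rw [coeffZ_neg hr, coeffZ_neg hr]; ring
  · rw [coeffZ, coeffZ, if_pos hr, if_pos hr, coeff_xd]
    congr 1
    exact_mod_cast congrArg (Int.cast : ℤ → ℚ) (Int.toNat_of_nonneg hr)

lemma coeffZ_mul (f g : PowerSeries ℚ) (r : ℤ) (N : ℕ) (hN : r < N) :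
    coeffZ r (f * g) = ∑ k ∈ range N, PowerSeries.coeff k f * coeffZ (r - k) g := by
  rcases lt_or_ge r 0 with hr | hr
  · rw [coeffZ_neg hr]
    refine (Finset.sum_eq_zero fun k _ => ?_).symm
    rw [coeffZ_neg (by omega), mul_zero]
  · obtain ⟨r', rfl⟩ : ∃ r' : ℕ, r = (r' : ℤ) := ⟨r.toNat, (Int.toNat_of_nonneg hr).symm⟩
    rw [coeffZ_natCast, PowerSeries.coeff_mul, Finset.Nat.sum_antidiagonal_eq_sum_range_succ_mk]
    have hNn : r' < N := by exact_mod_cast hN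
    rw [show (∑ k ∈ range (r' + 1),
          PowerSeries.coeff (k, r' - k).1 f * PowerSeries.coeff (k, r' - k).2 g) =
        ∑ k ∈ range (r' + 1), PowerSeries.coeff k f * coeffZ ((r' : ℤ) - k) g from
      Finset.sum_congr rfl fun k hk => by
        rw [mem_range] at hk
        congr 1
        rw [show ((r' : ℤ) - k) = ((r' - k : ℕ) : ℤ) by omega, coeffZ_natCast]]
    refine Finset.sum_subset (fun x hx => by simp only [mem_range] at *; omega)
      (fun k _ hk => ?_)
    rw [mem_range, not_lt] at hk
    rw [coeffZ_neg (by omega), mul_zero]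

/-- The key weighted-convolution identity. -/
lemma key1 (Φ : PowerSeries ℚ) (a g n : ℕ) (h : n = a + g) (r : ℤ) (N : ℕ) (hN : r < N) :
    (n : ℚ) * ∑ k ∈ range N, (k : ℚ) * PowerSeries.coeff k (Φ ^ a) * coeffZ (r - k) (Φ ^ g) =
      (a : ℚ) * (r : ℚ) * coeffZ r (Φ ^ n) := by
  have h1 : ∑ k ∈ range N, (k : ℚ) * PowerSeries.coeff k (Φ ^ a) * coeffZ (r - k) (Φ ^ g) =
      coeffZ r (xd (Φ ^ a) * Φ ^ g) := by
    rw [coeffZ_mul _ _ r N hN]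
    refine Finset.sum_congr rfl fun k _ => ?_
    rw [coeff_xd]
  rw [h1, show (n : ℚ) * coeffZ r (xd (Φ ^ a) * Φ ^ g) = coeffZ r ((n:ℚ) • (xd (Φ ^ a) * Φ ^ g))
    from (coeffZ_smul _ _ _).symm, key_pow_identity Φ a g n h, coeffZ_smul, coeffZ_xd]
  ring
open Finset

namespace ChottinAux

variable {m : ℕ}

lemma degree_eq (d : Fin m →₀ ℕ) : (d.sum fun _ v => v) = ∑ i, d i :=
  Finsupp.sum_fintype _ _ (fun _ => rfl)

lemma coeff_pow_eq_zero {B : MvPowerSeries (Fin m) ℚ}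
    (hB : MvPowerSeries.constantCoeff B = 0) :
    ∀ {k : ℕ} {d : Fin m →₀ ℕ}, (∑ i, d i) < k → MvPowerSeries.coeff d (B ^ k) = 0 := by
  intro k
  induction k with
  | zero => intro d hd; omega
  | succ k ih =>
    intro d hd
    rw [pow_succ', MvPowerSeries.coeff_mul]
    refine Finset.sum_eq_zero fun p hp => ?_
    rw [Finset.HasAntidiagonal.mem_antidiagonal] at hp
    rcases eq_or_ne p.1 0 with h1 | h1
    · rw [h1, MvPowerSeries.coeff_zero_eq_constantCoeff, hB, zero_mul]
    · have hsum : ∑ i, d i = (∑ i, p.1 i) + ∑ i, p.2 i := by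
        rw [← Finset.sum_add_distrib]
        refine Finset.sum_congr rfl fun i _ => ?_
        rw [← hp]; rfl
      have h2 : 1 ≤ ∑ i, p.1 i := by
        by_contra hc
        push_neg at hc
        apply h1
        ext i
        have := Finset.sum_eq_zero_iff.mp (by omega : ∑ i, p.1 i = 0) i (mem_univ i)
        simpa using this
      have : (∑ i, p.2 i) < k := by omega
      rw [ih this, mul_zero]

lemma coeff_prod_congr {ι : Type*} (s : Finset ι) (f g : ι → MvPowerSeries (Fin m) ℚ)
    (γ : Fin m →₀ ℕ) (h : ∀ i ∈ s, ∀ d ≤ γ, MvPowerSeries.coeff d (f i) =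
      MvPowerSeries.coeff d (g i)) :
    ∀ d ≤ γ, MvPowerSeries.coeff d (∏ i ∈ s, f i) =
      MvPowerSeries.coeff d (∏ i ∈ s, g i) := by
  classical
  induction s using Finset.cons_induction with
  | empty => intro d _; rfl
  | cons a s ha ih =>
    intro d hd
    rw [Finset.prod_cons, Finset.prod_cons, MvPowerSeries.coeff_mul, MvPowerSeries.coeff_mul]
    refine Finset.sum_congr rfl fun p hp => ?_
    rw [Finset.HasAntidiagonal.mem_antidiagonal] at hp
    have hp1 : p.1 ≤ γ := le_trans (hp ▸ le_self_add) hd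
    have hp2 : p.2 ≤ γ := le_trans (hp ▸ le_add_self) hd
    rw [h a (mem_cons_self a s) p.1 hp1,
      ih (fun i hi => h i (mem_cons_of_mem hi)) p.2 hp2]

lemma prod_smul_mv {ι : Type*} (s : Finset ι) (c : ι → ℚ) (f : ι → MvPowerSeries (Fin m) ℚ) :
    ∏ i ∈ s, (c i • f i) = (∏ i ∈ s, c i) • ∏ i ∈ s, f i := by
  classical
  induction s using Finset.cons_induction with
  | empty => simp
  | cons a s ha ih => rw [Finset.prod_cons, Finset.prod_cons, Finset.prod_cons, ih,
      smul_mul_smul_comm]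

lemma coeff_phiComp (Ψ : PowerSeries ℚ) (B : MvPowerSeries (Fin m) ℚ) (d : Fin m →₀ ℕ) :
    MvPowerSeries.coeff d (phiComp Ψ B) =
      ∑ k ∈ range ((d.sum fun _ v => v) + 1),
        PowerSeries.coeff k Ψ * MvPowerSeries.coeff d (B ^ k) := rfl

lemma phiComp_coeff_trunc {B : MvPowerSeries (Fin m) ℚ}
    (hB : MvPowerSeries.constantCoeff B = 0) (Ψ : PowerSeries ℚ) (N : ℕ)
    (d : Fin m →₀ ℕ) (hd : (∑ i, d i) < N) :
    MvPowerSeries.coeff d (phiComp Ψ B) =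
      MvPowerSeries.coeff d (∑ k ∈ range N, PowerSeries.coeff k Ψ • B ^ k) := by
  rw [map_sum, coeff_phiComp]
  simp only [map_smul, smul_eq_mul]
  refine Finset.sum_subset (fun x hx => ?_) (fun k _ hk => ?_)
  · rw [mem_range] at *
    rw [degree_eq] at hx
    omega
  · rw [mem_range, not_lt, degree_eq] at hk
    rw [coeff_pow_eq_zero hB (by omega), mul_zero]

lemma phiComp_one (B : MvPowerSeries (Fin m) ℚ) : phiComp (1 : PowerSeries ℚ) B = 1 := by
  ext d
  rw [coeff_phiComp]
  rw [Finset.sum_eq_single 0]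
  · simp
  · intro k _ hk
    rw [PowerSeries.coeff_one, if_neg hk, zero_mul]
  · intro h
    exact absurd (mem_range.mpr (by omega)) h

lemma phiComp_mul {B : MvPowerSeries (Fin m) ℚ}
    (hB : MvPowerSeries.constantCoeff B = 0) (Φ Ψ : PowerSeries ℚ) :
    phiComp (Φ * Ψ) B = phiComp Φ B * phiComp Ψ B := by
  ext d
  set D := ∑ i, d i with hD
  set M := D + 1 with hM
  set e : ℕ → ℚ := fun t => MvPowerSeries.coeff d (B ^ t) with he
  have hevanish : ∀ t, D < t → e t = 0 := fun t ht => coeff_pow_eq_zero hB ht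
  -- RHS
  have hR : MvPowerSeries.coeff d (phiComp Φ B * phiComp Ψ B) =
      ∑ k ∈ range M, ∑ l ∈ range M,
        PowerSeries.coeff k Φ * PowerSeries.coeff l Ψ * e (k + l) := by
    rw [MvPowerSeries.coeff_mul]
    have hstep : ∀ p ∈ Finset.HasAntidiagonal.antidiagonal d,
        MvPowerSeries.coeff p.1 (phiComp Φ B) * MvPowerSeries.coeff p.2 (phiComp Ψ B) =
        ∑ k ∈ range M, ∑ l ∈ range M, (PowerSeries.coeff k Φ * PowerSeries.coeff l Ψ) *
          (MvPowerSeries.coeff p.1 (B ^ k) * MvPowerSeries.coeff p.2 (B ^ l)) := by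
      intro p hp
      rw [Finset.HasAntidiagonal.mem_antidiagonal] at hp
      have h1 : (∑ i, p.1 i) < M := by
        have : ∑ i, p.1 i ≤ D := by
          rw [hD, ← hp]
          exact Finset.sum_le_sum fun i _ => by rw [Finsupp.add_apply]; omega
        omega
      have h2 : (∑ i, p.2 i) < M := by
        have : ∑ i, p.2 i ≤ D := by
          rw [hD, ← hp]
          exact Finset.sum_le_sum fun i _ => by rw [Finsupp.add_apply]; omega
        omega
      rw [phiComp_coeff_trunc hB Φ M p.1 h1, phiComp_coeff_trunc hB Ψ M p.2 h2,
        map_sum, map_sum]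
      simp only [map_smul, smul_eq_mul]
      rw [Finset.sum_mul_sum]
      refine Finset.sum_congr rfl fun k _ => Finset.sum_congr rfl fun l _ => by ring
    rw [Finset.sum_congr rfl hstep, Finset.sum_comm]
    refine Finset.sum_congr rfl fun k _ => ?_
    rw [Finset.sum_comm]
    refine Finset.sum_congr rfl fun l _ => ?_
    rw [← Finset.mul_sum]
    congr 1
    show _ = MvPowerSeries.coeff d (B ^ (k + l))
    rw [pow_add, MvPowerSeries.coeff_mul]
  -- LHS
  have hL : MvPowerSeries.coeff d (phiComp (Φ * Ψ) B) =
      ∑ t ∈ range M, (∑ q ∈ Finset.HasAntidiagonal.antidiagonal t,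
        PowerSeries.coeff q.1 Φ * PowerSeries.coeff q.2 Ψ * e (q.1 + q.2)) := by
    rw [coeff_phiComp, degree_eq, ← hD, ← hM]
    refine Finset.sum_congr rfl fun t _ => ?_
    rw [PowerSeries.coeff_mul, Finset.sum_mul]
    refine Finset.sum_congr rfl fun q hq => ?_
    rw [Finset.HasAntidiagonal.mem_antidiagonal] at hq
    rw [hq]
  rw [hL, hR]
  -- reindex
  rw [← Finset.sum_sigma (range M) (fun t => Finset.HasAntidiagonal.antidiagonal t)
    (fun q => PowerSeries.coeff q.2.1 Φ * PowerSeries.coeff q.2.2 Ψ * e (q.2.1 + q.2.2))]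
  rw [← Finset.sum_product' (s := range M) (t := range M)
    (f := fun k l => PowerSeries.coeff k Φ * PowerSeries.coeff l Ψ * e (k + l))]
  -- restrict RHS to pairs with sum < M
  rw [← Finset.sum_subset (Finset.filter_subset (fun q => q.1 + q.2 < M)
      (range M ×ˢ range M)) (fun q hqmem hq => ?_)]
  · refine Finset.sum_nbij' (fun q => (q.2.1, q.2.2)) (fun q => ⟨q.1 + q.2, (q.1, q.2)⟩)
      ?_ ?_ ?_ ?_ ?_
    · rintro ⟨t, q⟩ hq
      simp only [Finset.mem_sigma, mem_range, Finset.HasAntidiagonal.mem_antidiagonal] at hq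
      simp only [Finset.mem_filter, Finset.mem_product, mem_range]
      obtain ⟨ht, hq2⟩ := hq
      constructor
      · constructor <;> omega
      · omega
    · rintro ⟨k, l⟩ hq
      simp only [Finset.mem_filter, Finset.mem_product, mem_range] at hq
      simp only [Finset.mem_sigma, mem_range, Finset.HasAntidiagonal.mem_antidiagonal]
      exact ⟨hq.2, trivial⟩
    · rintro ⟨t, q⟩ hq
      simp only [Finset.mem_sigma, mem_range, Finset.HasAntidiagonal.mem_antidiagonal] at hq
      simp only [Sigma.mk.inj_iff]
      exact ⟨by rw [hq.2], by simp⟩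
    · rintro ⟨k, l⟩ _
      rfl
    · rintro ⟨t, q⟩ _
      rfl
  · have hnot : ¬ (q.1 + q.2 < M) := fun hc => hq (Finset.mem_filter.mpr ⟨hqmem, hc⟩)
    rw [hevanish _ (by omega), mul_zero]

variable {m : ℕ}

lemma phiComp_pow {B : MvPowerSeries (Fin m) ℚ}
    (hB : MvPowerSeries.constantCoeff B = 0) (Φ : PowerSeries ℚ) (s : ℕ) :
    phiComp (Φ ^ s) B = (phiComp Φ B) ^ s := by
  induction s with
  | zero => rw [pow_zero, pow_zero, phiComp_one]
  | succ s ih => rw [pow_succ, pow_succ, phiComp_mul hB, ih]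

lemma constantCoeff_phiComp (Ψ : PowerSeries ℚ) (B : MvPowerSeries (Fin m) ℚ) :
    MvPowerSeries.constantCoeff (phiComp Ψ B) = PowerSeries.coeff 0 Ψ := by
  rw [← MvPowerSeries.coeff_zero_eq_constantCoeff, coeff_phiComp]
  have h0 : ((0 : Fin m →₀ ℕ).sum fun _ v => v) = 0 := by simp
  rw [h0, Finset.sum_range_one, pow_zero, MvPowerSeries.coeff_zero_eq_constantCoeff, map_one,
    mul_one]

lemma prod_X_pow (σ : Fin m → ℕ) :
    (∏ j, (MvPowerSeries.X j : MvPowerSeries (Fin m) ℚ) ^ σ j) =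
      MvPowerSeries.monomial (Finsupp.equivFunOnFinite.symm σ) 1 := by
  classical
  have key : ∀ s : Finset (Fin m),
      (∏ j ∈ s, (MvPowerSeries.X j : MvPowerSeries (Fin m) ℚ) ^ σ j) =
        MvPowerSeries.monomial (∑ j ∈ s, Finsupp.single j (σ j)) 1 := by
    intro s
    induction s using Finset.cons_induction with
    | empty => simp
    | cons a s ha ih =>
      rw [Finset.prod_cons, Finset.sum_cons, ih, MvPowerSeries.X_pow_eq,
        MvPowerSeries.monomial_mul_monomial, one_mul]
  have hfs : (∑ j : Fin m, Finsupp.single j (σ j)) = Finsupp.equivFunOnFinite.symm σ := by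
    ext i
    rw [Finsupp.finset_sum_apply, Finset.sum_eq_single i (fun j _ hj =>
      Finsupp.single_eq_of_ne' hj) (fun h => absurd (mem_univ i) h)]
    simp
  rw [key univ, hfs]

lemma prod_u_pow (A : Fin m → MvPowerSeries (Fin m) ℚ) (k : Fin m → ℕ) :
    ∏ i, (∏ j ∈ univ.erase i, A j) ^ k i =
      ∏ j, (A j) ^ (∑ i ∈ univ.erase j, k i) := by
  have h1 : ∀ i : Fin m, (∏ j ∈ univ.erase i, A j) ^ k i = ∏ j ∈ univ.erase i, (A j) ^ k i :=
    fun i => by rw [← Finset.prod_pow]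
  rw [Finset.prod_congr rfl fun i _ => h1 i]
  rw [Finset.prod_comm' (s' := fun j => univ.erase j) (t' := univ) (fun i j => by
    simp only [Finset.mem_erase, mem_univ, and_true, true_and]
    exact ne_comm)]
  exact Finset.prod_congr rfl fun j _ => Finset.prod_pow_eq_pow_sum (univ.erase j) k (A j)

/-! ### per-coordinate sums -/

lemma percoord_P (Φ : PowerSeries ℚ) (a g n : ℕ) (h : n = a + g) (β : ℕ) (N : ℕ)
    (hN : (β : ℤ) < N) :
    ∑ t ∈ range N, PowerSeries.coeff t (Φ ^ a) * coeffZ ((β : ℤ) - g - t) (Φ ^ g) =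
      coeffZ ((β : ℤ) - g) (Φ ^ n) := by
  rw [h, pow_add, coeffZ_mul _ _ ((β : ℤ) - g) N (by omega)]

lemma percoord_SW (Φ : PowerSeries ℚ) (a g n : ℕ) (h : n = a + g) (hg : 1 ≤ g) (β : ℕ)
    (N : ℕ) (hN : (β : ℤ) < N) :
    ∑ t ∈ range N, PowerSeries.coeff t (Φ ^ a) * coeffZ ((β : ℤ) - g - t) (Φ ^ g) *
        (1 + ((β : ℚ) - g - t) / g) =
      (1 + ((β : ℚ) - g) / n) * coeffZ ((β : ℤ) - g) (Φ ^ n) := by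
  have hn : 1 ≤ n := by omega
  have hnQ : (n : ℚ) ≠ 0 := by positivity
  have hgQ : (g : ℚ) ≠ 0 := by positivity
  have hP := percoord_P Φ a g n h β N hN
  have hQ := key1 Φ a g n h ((β : ℤ) - g) N (by omega)
  rw [show ((((β : ℤ) - (g : ℤ)) : ℤ) : ℚ) = (β : ℚ) - g from by push_cast; ring] at hQ
  set T := coeffZ ((β : ℤ) - g) (Φ ^ n) with hT
  have hQ' : (∑ t ∈ range N, (t : ℚ) * PowerSeries.coeff t (Φ ^ a) *
      coeffZ ((β : ℤ) - g - t) (Φ ^ g)) = (a : ℚ) * ((β : ℚ) - g) * T / n := by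
    field_simp
    linear_combination hQ
  have hsum : (∑ t ∈ range N, PowerSeries.coeff t (Φ ^ a) *
      coeffZ ((β : ℤ) - g - t) (Φ ^ g) * (1 + ((β : ℚ) - g - t) / g)) =
      (∑ t ∈ range N, PowerSeries.coeff t (Φ ^ a) * coeffZ ((β : ℤ) - g - t) (Φ ^ g))
      + (1 / (g : ℚ)) * ((((β : ℚ) - g) * ∑ t ∈ range N, PowerSeries.coeff t (Φ ^ a) *
          coeffZ ((β : ℤ) - g - t) (Φ ^ g))
        - ∑ t ∈ range N, (t : ℚ) * PowerSeries.coeff t (Φ ^ a) *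
            coeffZ ((β : ℤ) - g - t) (Φ ^ g)) := by
    rw [Finset.mul_sum, ← Finset.sum_sub_distrib, Finset.mul_sum, ← Finset.sum_add_distrib]
    exact Finset.sum_congr rfl fun t _ => by field_simp
  rw [hsum, hP, hQ']
  rw [show (a : ℚ) = (n : ℚ) - g from by
    rw [show a = n - g from by omega, Nat.cast_sub (by omega)]]
  field_simp
  ring

lemma percoord_SV (Φ : PowerSeries ℚ) (a g n : ℕ) (h : n = a + g) (hg : 1 ≤ g) (β : ℕ)
    (N : ℕ) (hN : (β : ℤ) < N) :
    ∑ t ∈ range N, PowerSeries.coeff t (Φ ^ a) * coeffZ ((β : ℤ) - g - t) (Φ ^ g) *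
        (((β : ℚ) - g - t) / g) =
      (((β : ℚ) - g) / n) * coeffZ ((β : ℤ) - g) (Φ ^ n) := by
  have hSW := percoord_SW Φ a g n h hg β N hN
  have hP := percoord_P Φ a g n h β N hN
  have heq : (∑ t ∈ range N, PowerSeries.coeff t (Φ ^ a) * coeffZ ((β : ℤ) - g - t) (Φ ^ g) *
      (1 + ((β : ℚ) - g - t) / g)) =
      (∑ t ∈ range N, PowerSeries.coeff t (Φ ^ a) * coeffZ ((β : ℤ) - g - t) (Φ ^ g))
      + ∑ t ∈ range N, PowerSeries.coeff t (Φ ^ a) * coeffZ ((β : ℤ) - g - t) (Φ ^ g) *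
        (((β : ℚ) - g - t) / g) := by
    rw [← Finset.sum_add_distrib]
    exact Finset.sum_congr rfl fun t _ => by ring
  rw [heq, hP] at hSW
  linear_combination hSW

lemma DD0_vanish (hm : 2 ≤ m) (β : ℕ) (hβ1 : 1 ≤ β) (γ : Fin m → ℕ)
    (hsum : ∑ i, γ i = (m - 1) * β) (Φ : Fin m → PowerSeries ℚ) :
    ((∏ i, (1 + ((β : ℚ) - γ i) / (γ i))) -
      ∑ j, (((β : ℚ) - γ j) / (γ j)) * ∏ i ∈ univ.erase j, (1 + ((β : ℚ) - γ i) / (γ i))) *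
      ∏ i, coeffZ ((β : ℤ) - γ i) ((Φ i) ^ (γ i)) = 0 := by
  by_cases hz : ∃ i, coeffZ ((β : ℤ) - γ i) ((Φ i) ^ (γ i)) = 0
  · obtain ⟨i, hi⟩ := hz
    exact mul_eq_zero_of_right _ (Finset.prod_eq_zero (mem_univ i) hi)
  · push_neg at hz
    have hβQ : (β : ℚ) ≠ 0 := Nat.cast_ne_zero.mpr (by omega)
    have hγ1 : ∀ i, 1 ≤ γ i := by
      intro i
      by_contra h0
      have hγ0 : γ i = 0 := by omega
      apply hz i
      rw [hγ0, pow_zero]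
      rw [show ((β : ℤ) - ((0 : ℕ) : ℤ)) = (β : ℤ) from by push_cast; ring]
      exact coeffZ_one (by exact_mod_cast (show β ≠ 0 by omega))
    have hγQ : ∀ i, (γ i : ℚ) ≠ 0 := fun i => Nat.cast_ne_zero.mpr (by have := hγ1 i; omega)
    have hfac : ∀ i, (1 + ((β : ℚ) - γ i) / (γ i)) = (β : ℚ) / γ i := fun i => by
      rw [eq_div_iff (hγQ i), add_mul, one_mul, div_mul_cancel₀ _ (hγQ i)]
      ring
    have hbr : (∏ i, (1 + ((β : ℚ) - γ i) / (γ i))) =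
        ∑ j, (((β : ℚ) - γ j) / (γ j)) * ∏ i ∈ univ.erase j, (1 + ((β : ℚ) - γ i) / (γ i)) := by
      have e1 : (∏ i, (1 + ((β : ℚ) - γ i) / (γ i))) = ∏ i, ((β : ℚ) / γ i) :=
        Finset.prod_congr rfl fun i _ => hfac i
      have e2 : ∀ j, (∏ i ∈ univ.erase j, (1 + ((β : ℚ) - γ i) / (γ i))) =
          ∏ i ∈ univ.erase j, ((β : ℚ) / γ i) :=
        fun j => Finset.prod_congr rfl fun i _ => hfac i
      rw [e1, Finset.sum_congr rfl fun j _ => by rw [e2 j]]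
      have hPER : ∀ j : Fin m, ∏ i ∈ univ.erase j, ((β : ℚ) / γ i) =
          (∏ i, ((β : ℚ) / γ i)) / ((β : ℚ) / γ j) := by
        intro j
        rw [← Finset.mul_prod_erase univ _ (mem_univ j),
          mul_div_cancel_left₀ _ (div_ne_zero hβQ (hγQ j))]
      have hterm : ∀ j : Fin m, (((β : ℚ) - γ j) / (γ j)) * ∏ i ∈ univ.erase j,
          ((β : ℚ) / γ i) = (((β : ℚ) - γ j) / β) * ∏ i, ((β : ℚ) / γ i) := by
        intro j
        rw [hPER j, div_div_eq_mul_div]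
        rw [show ((β:ℚ) - γ j) / γ j * ((∏ i, ((β:ℚ)/γ i)) * γ j / β) =
          (((β:ℚ) - γ j) / β * (∏ i, ((β:ℚ)/γ i))) * (γ j / γ j) from by ring]
        rw [div_self (hγQ j), mul_one]
      rw [Finset.sum_congr rfl fun j _ => hterm j, ← Finset.sum_mul]
      have hs : (∑ j, (((β : ℚ) - γ j) / β)) = 1 := by
        rw [← Finset.sum_div, Finset.sum_sub_distrib, Finset.sum_const, card_univ,
          Fintype.card_fin, nsmul_eq_mul]
        have hc : (∑ i, (γ i : ℚ)) = ((m : ℚ) - 1) * β := by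
          rw [← Nat.cast_sum, hsum]
          push_cast [Nat.cast_sub (by omega : 1 ≤ m)]
          ring
        rw [hc]
        field_simp
        ring
      rw [hs, one_mul]
    rw [hbr, sub_self, zero_mul]

lemma final_algebra (hm : 2 ≤ m) (β : ℕ) (hβ1 : 1 ≤ β) (γ : Fin m → ℕ)
    (hsum : ∑ i, γ i = (m - 1) * β)
    (T SW SV b : Fin m → ℚ)
    (hTneg : ∀ i, ((β : ℤ) - γ i) < 0 → T i = 0)
    (hb0 : ∀ i, ((β : ℤ) - γ i) = 0 → b i = 0)
    (hcase : ∀ i, (1 ≤ γ i ∧ SW i = (1 + b i) * T i ∧ SV i = b i * T i) ∨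
      (γ i = 0 ∧ SW i = T i ∧ SV i = 0)) :
    (∏ i, SW i) - ∑ j, SV j * ∏ i ∈ univ.erase j, SW i =
      ((∏ i, (1 + b i)) - ∑ j, b j * ∏ i ∈ univ.erase j, (1 + b i)) * ∏ i, T i := by
  by_cases hall : ∀ i, 1 ≤ γ i
  · have hSW : ∀ i, SW i = (1 + b i) * T i := fun i =>
      ((hcase i).resolve_right (fun h => by have := hall i; omega)).2.1
    have hSV : ∀ i, SV i = b i * T i := fun i =>
      ((hcase i).resolve_right (fun h => by have := hall i; omega)).2.2
    have h1 : ∏ i, SW i = (∏ i, (1 + b i)) * ∏ i, T i := by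
      rw [← Finset.prod_mul_distrib]
      exact Finset.prod_congr rfl fun i _ => hSW i
    have h2 : ∀ j, SV j * ∏ i ∈ univ.erase j, SW i =
        (b j * ∏ i ∈ univ.erase j, (1 + b i)) * ∏ i, T i := by
      intro j
      rw [hSV j, Finset.prod_congr rfl fun i _ => hSW i,
        ← Finset.mul_prod_erase univ T (mem_univ j), Finset.prod_mul_distrib]
      ring
    rw [h1, Finset.sum_congr rfl fun j _ => h2 j, ← Finset.sum_mul, sub_mul]
  · push_neg at hall
    obtain ⟨i0, hi0⟩ := hall
    have hγi0 : γ i0 = 0 := by omega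
    by_cases hz : ∃ i, T i = 0
    · obtain ⟨i1, h1⟩ := hz
      have hSWz : SW i1 = 0 := by
        rcases hcase i1 with ⟨_, h, _⟩ | ⟨_, h, _⟩
        · rw [h, h1, mul_zero]
        · rw [h, h1]
      have hSVz : SV i1 = 0 := by
        rcases hcase i1 with ⟨_, _, h⟩ | ⟨_, _, h⟩
        · rw [h, h1, mul_zero]
        · exact h
      rw [Finset.prod_eq_zero (mem_univ i1) h1, mul_zero,
        Finset.prod_eq_zero (mem_univ i1) hSWz]
      rw [Finset.sum_eq_zero (fun j _ => ?_), sub_zero]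
      by_cases hj : j = i1
      · rw [hj, hSVz, zero_mul]
      · rw [Finset.prod_eq_zero (Finset.mem_erase.mpr ⟨Ne.symm hj, mem_univ i1⟩) hSWz, mul_zero]
    · push_neg at hz
      have hTnn : ∀ i, 0 ≤ (β : ℤ) - γ i := by
        intro i
        by_contra hc
        exact hz i (hTneg i (by omega))
      have hsint : ∑ i, ((β : ℤ) - γ i) = β := by
        have h1 : ∑ i : Fin m, ((β : ℤ) - γ i) = m * β - ∑ i, (γ i : ℤ) := by
          rw [Finset.sum_sub_distrib, Finset.sum_const, card_univ, Fintype.card_fin,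
            nsmul_eq_mul]
        have h2 : (∑ i, (γ i : ℤ)) = (((m - 1) * β : ℕ) : ℤ) := by
          rw [← Nat.cast_sum, hsum]
        rw [h1, h2]
        push_cast [Nat.cast_sub (by omega : 1 ≤ m)]
        ring
      have hβsize : ∀ i, i ≠ i0 → (β : ℤ) - γ i = 0 := by
        intro i hne
        have hi0v : (β : ℤ) - γ i0 = β := by rw [hγi0]; push_cast; ring
        have hps : ∑ j ∈ ({i0, i} : Finset (Fin m)), ((β : ℤ) - γ j) =
            ((β : ℤ) - γ i0) + ((β : ℤ) - γ i) := Finset.sum_pair (Ne.symm hne)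
        have hpair : ((β : ℤ) - γ i0) + ((β : ℤ) - γ i) ≤ ∑ j, ((β : ℤ) - γ j) := by
          rw [← hps]
          exact Finset.sum_le_sum_of_subset_of_nonneg (fun x _ => mem_univ x)
            (fun j _ _ => hTnn j)
        have := hTnn i
        omega
      have hbz : ∀ i, i ≠ i0 → b i = 0 := fun i hi => hb0 i (hβsize i hi)
      have hSW : ∀ i, SW i = T i := by
        intro i
        rcases hcase i with ⟨hg, h, _⟩ | ⟨_, h, _⟩
        · by_cases hii : i = i0
          · exfalso; rw [hii] at hg; omega
          · rw [h, hbz i hii]; ring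
        · exact h
      have hSV : ∀ i, SV i = 0 := by
        intro i
        rcases hcase i with ⟨hg, _, h⟩ | ⟨_, _, h⟩
        · by_cases hii : i = i0
          · exfalso; rw [hii] at hg; omega
          · rw [h, hbz i hii, zero_mul]
        · exact h
      rw [Finset.prod_congr rfl fun i _ => hSW i,
        Finset.sum_eq_zero (fun j _ => by rw [hSV j, zero_mul]), sub_zero]
      have hfac : ∀ i, i ≠ i0 → (1 + b i) = 1 := fun i hi => by rw [hbz i hi]; ring
      have hprod : ∏ i, (1 + b i) = 1 + b i0 := by
        rw [← Finset.mul_prod_erase univ _ (mem_univ i0),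
          Finset.prod_eq_one (fun i hi => hfac i (Finset.mem_erase.mp hi).1), mul_one]
      have hterm : ∀ j, b j * ∏ i ∈ univ.erase j, (1 + b i) =
          if j = i0 then b i0 else 0 := by
        intro j
        by_cases hj : j = i0
        · subst hj
          rw [if_pos rfl, Finset.prod_eq_one (fun i hi => hfac i (Finset.mem_erase.mp hi).1),
            mul_one]
        · rw [if_neg hj, hbz j hj, zero_mul]
      rw [hprod, Finset.sum_congr rfl fun j _ => hterm j, Finset.sum_ite_eq' univ i0
        (fun _ => b i0), if_pos (mem_univ i0)]
      ring

lemma perk_algebra (c bb w v : Fin m → ℚ) :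
    (∏ i, c i) * (((∏ i, w i) - ∑ j, v j * ∏ i ∈ univ.erase j, w i) * ∏ i, bb i) =
    (∏ i, c i * bb i * w i) -
      ∑ j, (c j * bb j * v j) * ∏ i ∈ univ.erase j, (c i * bb i * w i) := by
  have h1 : ∏ i, (c i * bb i * w i) = ((∏ i, c i) * (∏ i, bb i)) * ∏ i, w i := by
    rw [Finset.prod_mul_distrib, Finset.prod_mul_distrib]
  have h2 : ∀ j : Fin m, (c j * bb j * v j) * ∏ i ∈ univ.erase j, (c i * bb i * w i) =
      (∏ i, c i) * ((v j * ∏ i ∈ univ.erase j, w i) * ∏ i, bb i) := by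
    intro j
    rw [Finset.prod_mul_distrib, Finset.prod_mul_distrib,
      ← Finset.mul_prod_erase univ c (mem_univ j), ← Finset.mul_prod_erase univ bb (mem_univ j)]
    ring
  rw [sub_mul, mul_sub, Finset.sum_mul, Finset.mul_sum]
  congr 1
  · rw [h1]; ring
  · exact Finset.sum_congr rfl fun j _ => (h2 j).symm

lemma swap_algebra (N : ℕ) (W V : Fin m → ℕ → ℚ) (j : Fin m) :
    (∑ k ∈ Fintype.piFinset (fun _ : Fin m => range N),
      V j (k j) * ∏ i ∈ univ.erase j, W i (k i)) =
    (∑ t ∈ range N, V j t) * ∏ i ∈ univ.erase j, (∑ t ∈ range N, W i t) := by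
  classical
  have h1 : ∀ k : Fin m → ℕ, V j (k j) * ∏ i ∈ univ.erase j, W i (k i) =
      ∏ i, (if i = j then V j (k i) else W i (k i)) := by
    intro k
    rw [← Finset.mul_prod_erase univ _ (mem_univ j), if_pos rfl]
    congr 1
    exact Finset.prod_congr rfl fun i hi => by rw [if_neg (Finset.mem_erase.mp hi).1]
  rw [Finset.sum_congr rfl fun k _ => h1 k]
  rw [show (∑ k ∈ Fintype.piFinset fun _ : Fin m => range N,
      ∏ i, (if i = j then V j (k i) else W i (k i))) =
      ∏ i, ∑ t ∈ range N, (if i = j then V j t else W i t) from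
    (Finset.prod_univ_sum (fun _ => range N) (fun i t => if i = j then V j t else W i t)).symm]
  rw [← Finset.mul_prod_erase univ _ (mem_univ j)]
  congr 1
  · exact Finset.sum_congr rfl fun t _ => if_pos rfl
  · exact Finset.prod_congr rfl fun i hi => Finset.sum_congr rfl fun t _ => by
      rw [if_neg (Finset.mem_erase.mp hi).1]

lemma equivFun_symm_apply (f : Fin m → ℕ) (i : Fin m) :
    (Finsupp.equivFunOnFinite.symm f) i = f i := rfl


variable {m : ℕ}
theorem grand (hm : 2 ≤ m) (A : Fin m → MvPowerSeries (Fin m) ℚ)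
    (Φ : Fin m → PowerSeries ℚ)
    (hA : ∀ i, A i = MvPowerSeries.X i * phiComp (Φ i) (∏ j ∈ univ.erase i, A j)) :
    ∀ β : ℕ, ∀ n α : Fin m → ℕ, (∀ i, α i ≤ n i) → ((∑ i, (n i - α i)) = (m - 1) * β) →
    MvPowerSeries.coeff (Finsupp.equivFunOnFinite.symm fun i => n i - α i)
      (∏ i, phiComp ((Φ i) ^ (α i)) (∏ j ∈ univ.erase i, A j)) =
    ((∏ i, (1 + ((β : ℚ) - n i + α i) / n i)) -
      ∑ j, (((β : ℚ) - n j + α j) / n j) *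
        ∏ i ∈ univ.erase j, (1 + ((β : ℚ) - n i + α i) / n i)) *
    ∏ i, coeffZ ((β : ℤ) - n i + α i) ((Φ i) ^ (n i)) := by
  have hA0 : ∀ j, MvPowerSeries.constantCoeff (A j) = 0 := by
    intro j
    rw [hA j, map_mul, MvPowerSeries.constantCoeff_X, zero_mul]
  have hnt : Nontrivial (Fin m) := by
    constructor
    exact ⟨⟨0, by omega⟩, ⟨1, by omega⟩, by simp⟩
  have hu0 : ∀ i, MvPowerSeries.constantCoeff (∏ j ∈ univ.erase i, A j) = 0 := by
    intro i
    obtain ⟨j, hj⟩ := exists_ne i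
    rw [map_prod]
    exact Finset.prod_eq_zero (Finset.mem_erase.mpr ⟨hj, mem_univ j⟩) (hA0 j)
  intro β
  induction β using Nat.strong_induction_on with
  | _ β IH =>
  intro n α hαn hsum
  rcases Nat.eq_zero_or_pos β with hβ0 | hβ1
  · -- base case β = 0
    subst hβ0
    have hγ0 : ∀ i, n i - α i = 0 := by
      intro i
      have := Finset.sum_eq_zero_iff.mp (by rw [hsum]; ring) i (mem_univ i)
      exact this
    have hnα : ∀ i, n i = α i := fun i => by have h1 := hγ0 i; have h2 := hαn i; omega
    have hidx : (Finsupp.equivFunOnFinite.symm fun i => n i - α i) = 0 := by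
      ext i
      rw [equivFun_symm_apply, hγ0 i]
      rfl
    rw [hidx, MvPowerSeries.coeff_zero_eq_constantCoeff, map_prod]
    have hLHS : ∀ i : Fin m, MvPowerSeries.constantCoeff
        (phiComp ((Φ i) ^ (α i)) (∏ j ∈ univ.erase i, A j)) =
        PowerSeries.coeff 0 ((Φ i) ^ (α i)) := fun i => constantCoeff_phiComp _ _
    rw [Finset.prod_congr rfl fun i _ => hLHS i]
    have hz : ∀ i : Fin m, (((0 : ℕ) : ℚ) - n i + α i) = 0 := by
      intro i
      rw [hnα i]
      push_cast
      ring
    have h1 : (∏ i, (1 + (((0 : ℕ) : ℚ) - n i + α i) / n i)) = 1 := by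
      refine Finset.prod_eq_one fun i _ => ?_
      rw [hz i, zero_div, add_zero]
    have h2 : (∑ j, ((((0 : ℕ) : ℚ) - n j + α j) / n j) *
        ∏ i ∈ univ.erase j, (1 + (((0 : ℕ) : ℚ) - n i + α i) / n i)) = 0 := by
      refine Finset.sum_eq_zero fun j _ => ?_
      rw [hz j, zero_div, zero_mul]
    rw [h1, h2, sub_zero, one_mul]
    refine Finset.prod_congr rfl fun i _ => ?_
    have hzz : (((0 : ℕ) : ℤ) - n i + α i) = ((0 : ℕ) : ℤ) := by
      have := hnα i
      omega
    rw [hzz, coeffZ_natCast, hnα i]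
  · -- inductive step β ≥ 1
    have hγ : ∀ i, (fun i => n i - α i) i = n i - α i := fun i => rfl
    set γ : Fin m → ℕ := fun i => n i - α i with hγdef
    have hnγ : ∀ i, n i = α i + γ i := by
      intro i
      have h1 := hαn i
      simp only [hγdef]
      omega
    set γF := Finsupp.equivFunOnFinite.symm γ with hγFdef
    set N := (m - 1) * β + 1 with hNdef
    have hsumγ : ∑ i, γ i = (m - 1) * β := hsum
    have hβN : (β : ℤ) < (N : ℤ) := by
      have h1 : β ≤ (m - 1) * β := Nat.le_mul_of_pos_left β (by omega)
      push_cast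
      omega
    have hdegγF : ∑ i, γF i = (m - 1) * β := by
      rw [show (∑ i, γF i) = ∑ i, γ i from Finset.sum_congr rfl fun i _ =>
        equivFun_symm_apply γ i]
      exact hsumγ
    have hγFne : γF ≠ 0 := by
      intro h0
      have h1 : (m - 1) * β = 0 := by
        rw [← hdegγF, h0]
        simp
      rcases Nat.mul_eq_zero.mp h1 with h | h <;> omega
    have hZcast : ∀ i, (β : ℤ) - n i + α i = (β : ℤ) - γ i := by
      intro i
      have h1 := hαn i
      simp only [hγdef]
      omega
    have hQcast : ∀ i, (β : ℚ) - n i + α i = (β : ℚ) - γ i := by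
      intro i
      have h1 := hαn i
      rw [show (γ i : ℚ) = (n i : ℚ) - α i from by
        simp only [hγdef]; rw [Nat.cast_sub h1]]
      ring
    -- STEP 1: expansion
    have hexp : MvPowerSeries.coeff γF
        (∏ i, phiComp ((Φ i) ^ α i) (∏ j ∈ univ.erase i, A j)) =
        ∑ k ∈ Fintype.piFinset (fun _ : Fin m => range N),
          (∏ i, PowerSeries.coeff (k i) ((Φ i) ^ α i)) *
            MvPowerSeries.coeff γF (∏ i, (∏ j ∈ univ.erase i, A j) ^ (k i)) := by
      have h1 := coeff_prod_congr univ
        (fun i => phiComp ((Φ i) ^ α i) (∏ j ∈ univ.erase i, A j))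
        (fun i => ∑ t ∈ range N, PowerSeries.coeff t ((Φ i) ^ α i) •
          (∏ j ∈ univ.erase i, A j) ^ t) γF
        (fun i _ d hd => phiComp_coeff_trunc (hu0 i) _ N d (by
          have h2 : (∑ x, d x) ≤ ∑ x, γF x :=
            Finset.sum_le_sum fun x _ => Finsupp.le_def.mp hd x
          rw [hdegγF] at h2
          omega)) γF le_rfl
      rw [h1, Finset.prod_univ_sum, map_sum]
      refine Finset.sum_congr rfl fun k _ => ?_
      rw [prod_smul_mv, map_smul, smul_eq_mul]
    -- STEP 2: coefficient of u-power product
    have hcoeffu : ∀ k : Fin m → ℕ,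
        MvPowerSeries.coeff γF (∏ i, (∏ j ∈ univ.erase i, A j) ^ (k i)) =
        (if (Finsupp.equivFunOnFinite.symm fun j => ∑ i ∈ univ.erase j, k i) ≤ γF then
          MvPowerSeries.coeff
            (γF - Finsupp.equivFunOnFinite.symm fun j => ∑ i ∈ univ.erase j, k i)
            (∏ j, phiComp ((Φ j) ^ (∑ i ∈ univ.erase j, k i)) (∏ l ∈ univ.erase j, A l))
        else 0) := by
      intro k
      rw [prod_u_pow A k]
      have e1 : ∀ j : Fin m, (A j) ^ (∑ i ∈ univ.erase j, k i) =
          (MvPowerSeries.X j : MvPowerSeries (Fin m) ℚ) ^ (∑ i ∈ univ.erase j, k i) *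
            phiComp ((Φ j) ^ (∑ i ∈ univ.erase j, k i)) (∏ l ∈ univ.erase j, A l) := by
        intro j
        rw [hA j, mul_pow, phiComp_pow (hu0 j)]
      rw [Finset.prod_congr rfl fun j _ => e1 j, Finset.prod_mul_distrib, prod_X_pow,
        MvPowerSeries.coeff_monomial_mul]
      split_ifs with h
      · rw [one_mul]
      · rfl
    -- STEP 3: value of each term
    have hval : ∀ k ∈ Fintype.piFinset (fun _ : Fin m => range N),
        (if (Finsupp.equivFunOnFinite.symm fun j => ∑ i ∈ univ.erase j, k i) ≤ γF then
          MvPowerSeries.coeff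
            (γF - Finsupp.equivFunOnFinite.symm fun j => ∑ i ∈ univ.erase j, k i)
            (∏ j, phiComp ((Φ j) ^ (∑ i ∈ univ.erase j, k i)) (∏ l ∈ univ.erase j, A l))
        else 0) =
        ((∏ i, (1 + ((β : ℚ) - γ i - k i) / (γ i))) -
          ∑ j, (((β : ℚ) - γ j - k j) / (γ j)) *
            ∏ i ∈ univ.erase j, (1 + ((β : ℚ) - γ i - k i) / (γ i))) *
        ∏ i, coeffZ ((β : ℤ) - γ i - k i) ((Φ i) ^ (γ i)) := by
      intro k _
      set σ : Fin m → ℕ := fun j => ∑ i ∈ univ.erase j, k i with hσdef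
      set K := ∑ i, k i with hKdef
      have hσK : ∀ j, σ j + k j = K := by
        intro j
        simp only [hσdef, hKdef]
        exact Finset.sum_erase_add univ k (mem_univ j)
      split_ifs with hle
      · -- valid case
        have hσγ : ∀ i, σ i ≤ γ i := by
          intro i
          have h1 := Finsupp.le_def.mp hle i
          exact h1
        rcases Nat.eq_zero_or_pos K with hK0 | hK1
        · -- K = 0: term is 0 and RHS vanishes
          have hk0 : ∀ i, k i = 0 := by
            intro i
            have h1 : ∑ i, k i = 0 := by rw [← hKdef]; exact hK0
            exact Finset.sum_eq_zero_iff.mp h1 i (mem_univ i)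
          have hph1 : (∏ j, phiComp ((Φ j) ^ (σ j)) (∏ l ∈ univ.erase j, A l)) = 1 := by
            refine Finset.prod_eq_one fun j _ => ?_
            have hσ0 : σ j = 0 := by have h1 := hσK j; have h2 := hk0 j; omega
            rw [hσ0, pow_zero, phiComp_one]
          have hidx0 : (Finsupp.equivFunOnFinite.symm σ) = 0 := by
            ext i
            rw [equivFun_symm_apply]
            have hσ0 : σ i = 0 := by have h1 := hσK i; have h2 := hk0 i; omega
            rw [hσ0]
            rfl
          rw [hph1, hidx0, tsub_zero, MvPowerSeries.coeff_one, if_neg hγFne]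
          have hrw1 : ∀ i : Fin m, ((β : ℚ) - γ i - k i) = ((β : ℚ) - γ i) := fun i => by
            rw [hk0 i]
            push_cast
            ring
          have hrw2 : ∀ i : Fin m, ((β : ℤ) - γ i - k i) = ((β : ℤ) - γ i) := fun i => by
            rw [hk0 i]
            push_cast
            ring
          simp only [hrw1, hrw2]
          exact (DD0_vanish hm β hβ1 γ hsumγ Φ).symm
        · -- K ≥ 1: apply induction hypothesis
          have hKβ : K ≤ β := by
            have h1 : ∑ j, σ j ≤ ∑ j, γ j := Finset.sum_le_sum fun j _ => hσγ j
            have h2 : ∑ j, (σ j + k j) = ∑ j, (fun _ => K) j :=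
              Finset.sum_congr rfl fun j _ => hσK j
            rw [Finset.sum_add_distrib, Finset.sum_const, card_univ, Fintype.card_fin,
              smul_eq_mul] at h2
            have h3 : ∑ j, k j = K := by rw [← hKdef]
            have h4 : (m - 1) * K = ∑ j, σ j := by
              rw [Nat.sub_mul, one_mul]
              omega
            rw [hsumγ] at h1
            rw [← h4] at h1
            exact Nat.le_of_mul_le_mul_left (by
              calc (m - 1) * K ≤ (m - 1) * β := h1) (by omega : 0 < m - 1)
          have hβK : β - K < β := by omega
          have hsum' : ∑ i, (γ i - σ i) = (m - 1) * (β - K) := by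
            have h1 : ∑ i, (γ i - σ i) = ∑ i, γ i - ∑ i, σ i :=
              Finset.sum_tsub_distrib univ (fun i _ => hσγ i)
            have h2 : ∑ j, (σ j + k j) = ∑ j, (fun _ => K) j :=
              Finset.sum_congr rfl fun j _ => hσK j
            rw [Finset.sum_add_distrib, Finset.sum_const, card_univ, Fintype.card_fin,
              smul_eq_mul] at h2
            have h3 : ∑ j, k j = K := by rw [← hKdef]
            have h4 : (m - 1) * K = ∑ j, σ j := by
              rw [Nat.sub_mul, one_mul]
              omega
            rw [h1, hsumγ, ← h4, Nat.mul_sub]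
          have hIH := IH (β - K) hβK γ σ hσγ hsum'
          have hidx : (Finsupp.equivFunOnFinite.symm fun i => γ i - σ i) =
              γF - Finsupp.equivFunOnFinite.symm σ := by
            ext x
            rw [Finsupp.tsub_apply]
            rfl
          rw [hidx] at hIH
          rw [hIH]
          have hc1 : ∀ i : Fin m, (((β - K : ℕ) : ℚ) - γ i + σ i) = ((β : ℚ) - γ i - k i) := by
            intro i
            have h5 := hσK i
            have h6 : σ i = K - k i := by omega
            have h7 : k i ≤ K := by omega
            rw [Nat.cast_sub hKβ, h6, Nat.cast_sub h7]
            ring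
          have hc2 : ∀ i : Fin m, (((β - K : ℕ) : ℤ) - γ i + σ i) = ((β : ℤ) - γ i - k i) := by
            intro i
            have h5 := hσK i
            omega
          simp only [hc1, hc2]
      · -- invalid case
        symm
        have hex : ∃ j, γ j < σ j := by
          by_contra hc
          push_neg at hc
          refine hle (Finsupp.le_def.mpr fun i => ?_)
          exact hc i
        obtain ⟨j, hj⟩ := hex
        have hneg : ∃ i, ((β : ℤ) - γ i - k i) < 0 := by
          by_contra hc
          push_neg at hc
          have hsint : ∑ i, ((β : ℤ) - γ i - k i) = (β : ℤ) - K := by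
            rw [Finset.sum_sub_distrib, Finset.sum_sub_distrib, Finset.sum_const, card_univ,
              Fintype.card_fin, nsmul_eq_mul]
            have e1 : (∑ i, (γ i : ℤ)) = (((m - 1) * β : ℕ) : ℤ) := by
              rw [← Nat.cast_sum, hsumγ]
            have e2 : (∑ i, (k i : ℤ)) = (K : ℤ) := by
              rw [← Nat.cast_sum, hKdef]
            rw [e1, e2]
            push_cast [Nat.cast_sub (by omega : 1 ≤ m)]
            ring
          have hjb : ((β : ℤ) - γ j - k j) ≤ (β : ℤ) - K :=
            hsint ▸ Finset.single_le_sum (fun i _ => hc i) (mem_univ j)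
          have hKj := hσK j
          omega
        obtain ⟨i, hi⟩ := hneg
        exact mul_eq_zero_of_right _ (Finset.prod_eq_zero (mem_univ i) (coeffZ_neg hi _))
    -- STEP 4: assembly
    have hsummand : ∀ k ∈ Fintype.piFinset (fun _ : Fin m => range N),
        (∏ i, PowerSeries.coeff (k i) ((Φ i) ^ α i)) *
          MvPowerSeries.coeff γF (∏ i, (∏ j ∈ univ.erase i, A j) ^ (k i)) =
        (∏ i, PowerSeries.coeff (k i) ((Φ i) ^ α i) *
            coeffZ ((β : ℤ) - γ i - k i) ((Φ i) ^ (γ i)) *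
            (1 + ((β : ℚ) - γ i - k i) / (γ i))) -
          ∑ j, (PowerSeries.coeff (k j) ((Φ j) ^ α j) *
              coeffZ ((β : ℤ) - γ j - k j) ((Φ j) ^ (γ j)) *
              (((β : ℚ) - γ j - k j) / (γ j))) *
            ∏ i ∈ univ.erase j, (PowerSeries.coeff (k i) ((Φ i) ^ α i) *
              coeffZ ((β : ℤ) - γ i - k i) ((Φ i) ^ (γ i)) *
              (1 + ((β : ℚ) - γ i - k i) / (γ i))) := by
      intro k hk
      rw [hcoeffu k, hval k hk]
      exact perk_algebra (fun i => PowerSeries.coeff (k i) ((Φ i) ^ α i))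
        (fun i => coeffZ ((β : ℤ) - γ i - k i) ((Φ i) ^ (γ i)))
        (fun i => (1 + ((β : ℚ) - γ i - k i) / (γ i)))
        (fun j => (((β : ℚ) - γ j - k j) / (γ j)))
    rw [hexp, Finset.sum_congr rfl hsummand, Finset.sum_sub_distrib]
    rw [show (∑ k ∈ Fintype.piFinset fun _ : Fin m => range N,
        ∏ i, (PowerSeries.coeff (k i) ((Φ i) ^ α i) *
          coeffZ ((β : ℤ) - γ i - k i) ((Φ i) ^ (γ i)) *
          (1 + ((β : ℚ) - γ i - k i) / (γ i)))) =
        ∏ i, ∑ t ∈ range N, (PowerSeries.coeff t ((Φ i) ^ α i) *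
          coeffZ ((β : ℤ) - γ i - t) ((Φ i) ^ (γ i)) *
          (1 + ((β : ℚ) - γ i - t) / (γ i))) from
      (Finset.prod_univ_sum (fun _ => range N) (fun i t => PowerSeries.coeff t ((Φ i) ^ α i) *
          coeffZ ((β : ℤ) - γ i - t) ((Φ i) ^ (γ i)) *
          (1 + ((β : ℚ) - γ i - t) / (γ i)))).symm]
    rw [Finset.sum_comm]
    rw [Finset.sum_congr rfl fun j _ => swap_algebra N
      (fun i t => PowerSeries.coeff t ((Φ i) ^ α i) *
        coeffZ ((β : ℤ) - γ i - t) ((Φ i) ^ (γ i)) * (1 + ((β : ℚ) - γ i - t) / (γ i)))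
      (fun i t => PowerSeries.coeff t ((Φ i) ^ α i) *
        coeffZ ((β : ℤ) - γ i - t) ((Φ i) ^ (γ i)) * (((β : ℚ) - γ i - t) / (γ i))) j]
    simp only [hZcast]
    refine final_algebra hm β hβ1 γ hsumγ
      (fun i => coeffZ ((β : ℤ) - γ i) ((Φ i) ^ (n i)))
      (fun i => ∑ t ∈ range N, PowerSeries.coeff t ((Φ i) ^ α i) *
        coeffZ ((β : ℤ) - γ i - t) ((Φ i) ^ (γ i)) * (1 + ((β : ℚ) - γ i - t) / (γ i)))
      (fun i => ∑ t ∈ range N, PowerSeries.coeff t ((Φ i) ^ α i) *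
        coeffZ ((β : ℤ) - γ i - t) ((Φ i) ^ (γ i)) * (((β : ℚ) - γ i - t) / (γ i)))
      (fun i => ((β : ℚ) - n i + α i) / (n i))
      (fun i h => coeffZ_neg h _)
      (fun i h => ?_) (fun i => ?_)
    · -- hb0
      show ((β : ℚ) - n i + α i) / (n i) = 0
      have h3 := hZcast i
      have h4 : ((β : ℤ) - n i + α i) = 0 := by omega
      have h5 : ((β : ℚ) - n i + α i) = 0 := by
        have h6 := congrArg (Int.cast : ℤ → ℚ) h4
        push_cast at h6
        exact h6
      rw [h5, zero_div]
    · -- hcase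
      by_cases hγi : 1 ≤ γ i
      · left
        refine ⟨hγi, ?_, ?_⟩
        · show (∑ t ∈ range N, PowerSeries.coeff t ((Φ i) ^ α i) *
            coeffZ ((β : ℤ) - γ i - t) ((Φ i) ^ (γ i)) *
            (1 + ((β : ℚ) - γ i - t) / (γ i))) =
            (1 + ((β : ℚ) - n i + α i) / (n i)) * coeffZ ((β : ℤ) - γ i) ((Φ i) ^ (n i))
          rw [hQcast i]
          exact percoord_SW (Φ i) (α i) (γ i) (n i) (hnγ i) hγi β N hβN
        · show (∑ t ∈ range N, PowerSeries.coeff t ((Φ i) ^ α i) *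
            coeffZ ((β : ℤ) - γ i - t) ((Φ i) ^ (γ i)) *
            (((β : ℚ) - γ i - t) / (γ i))) =
            (((β : ℚ) - n i + α i) / (n i)) * coeffZ ((β : ℤ) - γ i) ((Φ i) ^ (n i))
          rw [hQcast i]
          exact percoord_SV (Φ i) (α i) (γ i) (n i) (hnγ i) hγi β N hβN
      · right
        have hγi0 : γ i = 0 := by omega
        refine ⟨hγi0, ?_, ?_⟩
        · have hP := percoord_P (Φ i) (α i) (γ i) (n i) (hnγ i) β N hβN
          show (∑ t ∈ range N, PowerSeries.coeff t ((Φ i) ^ α i) *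
            coeffZ ((β : ℤ) - γ i - t) ((Φ i) ^ (γ i)) *
            (1 + ((β : ℚ) - γ i - t) / (γ i))) = coeffZ ((β : ℤ) - γ i) ((Φ i) ^ (n i))
          rw [← hP]
          refine Finset.sum_congr rfl fun t _ => ?_
          rw [show (1 + ((β : ℚ) - γ i - t) / ((γ i : ℚ))) = 1 from by
            rw [hγi0]; norm_num, mul_one]
        · refine Finset.sum_eq_zero fun t _ => ?_
          rw [show ((((β : ℚ) - γ i - t)) / ((γ i : ℚ))) = 0 from by
            rw [hγi0]; norm_num, mul_zero]


end ChottinAux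

open ChottinAux Finset in
/-- generalized Chottin formula: if Aᵢ = xᵢ·Φᵢ(∏_{j≠i} Aⱼ),
nᵢ ≥ 1, 0 ≤ αᵢ ≤ nᵢ, β = (∑nᵢ − ∑αᵢ)/(m−1) ∈ ℕ, βᵢ = β − nᵢ + αᵢ, then
[x₁^{n₁}⋯x_m^{n_m}] ∏ Aᵢ^{αᵢ} = D·∏ᵢ [sᵢ^{βᵢ}] Φᵢ^{nᵢ}, where
D = ∏ᵢ(1+βᵢ/nᵢ) − ∑ⱼ(βⱼ/nⱼ)∏_{i≠j}(1+βᵢ/nᵢ). -/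
theorem stmt_5 {m : ℕ} (hm : 2 ≤ m)
    (A : Fin m → MvPowerSeries (Fin m) ℚ) (Φ : Fin m → PowerSeries ℚ)
    (hA : ∀ i, A i =
      MvPowerSeries.X i * phiComp (Φ i) (∏ j ∈ Finset.univ.erase i, A j))
    (nn aa : Fin m → ℕ) (hn : ∀ i, 1 ≤ nn i) (hna : ∀ i, aa i ≤ nn i)
    (β : ℕ) (hβ : (∑ i, nn i) - (∑ i, aa i) = (m - 1) * β) :
    MvPowerSeries.coeff (Finsupp.equivFunOnFinite.symm nn) (∏ i, (A i) ^ (aa i)) =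
      ((∏ i, (1 + ((β : ℚ) - nn i + aa i) / nn i)) -
        ∑ j, (((β : ℚ) - nn j + aa j) / nn j) *
          ∏ i ∈ Finset.univ.erase j, (1 + ((β : ℚ) - nn i + aa i) / nn i)) *
      ∏ i, coeffZ ((β : ℤ) - nn i + aa i) ((Φ i) ^ (nn i)) := by

  have hA0 : ∀ j, MvPowerSeries.constantCoeff (A j) = 0 := by
    intro j
    rw [hA j, map_mul, MvPowerSeries.constantCoeff_X, zero_mul]
  have hnt : Nontrivial (Fin m) := ⟨⟨0, by omega⟩, ⟨1, by omega⟩, by simp⟩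
  have hu0 : ∀ i, MvPowerSeries.constantCoeff (∏ j ∈ univ.erase i, A j) = 0 := by
    intro i
    obtain ⟨j, hj⟩ := exists_ne i
    rw [map_prod]
    exact Finset.prod_eq_zero (Finset.mem_erase.mpr ⟨hj, mem_univ j⟩) (hA0 j)
  have h1 : ∀ i : Fin m, (A i) ^ (aa i) =
      (MvPowerSeries.X i : MvPowerSeries (Fin m) ℚ) ^ (aa i) *
        phiComp ((Φ i) ^ (aa i)) (∏ j ∈ univ.erase i, A j) := fun i => by
    rw [hA i, mul_pow, phiComp_pow (hu0 i)]
  have hle : Finsupp.equivFunOnFinite.symm aa ≤ Finsupp.equivFunOnFinite.symm nn :=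
    Finsupp.le_def.mpr fun i => hna i
  rw [Finset.prod_congr rfl fun i _ => h1 i, Finset.prod_mul_distrib, prod_X_pow,
    MvPowerSeries.coeff_monomial_mul, if_pos hle, one_mul]
  have hidx : Finsupp.equivFunOnFinite.symm nn - Finsupp.equivFunOnFinite.symm aa =
      Finsupp.equivFunOnFinite.symm (fun i => nn i - aa i) := by
    ext x
    rw [Finsupp.tsub_apply]
    rfl
  rw [hidx]
  have hsum' : ∑ i, (nn i - aa i) = (m - 1) * β := by
    rw [Finset.sum_tsub_distrib univ (fun i _ => hna i), hβ]
  exact grand hm A Φ hA β nn aa hna hsum'
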